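/- arXiv:1203.1364 — 2 statements merged into one kernel-verified Lean document; each statement's English description precedes it below -/
import Mathlib

section
/- (Dimension-counting necessary condition for extremality.) Let ρ be a PPT state on H_A ⊗ H_B with dim H_A = M, dim H_B = N, rank ρ = r and rank ρ^Γ = s. If r² + s² > M²N² + 1, then there exists a Hermitian matrix H, not a scalar multiple of ρ, with range(H) ⊆ range(ρ) and range(H^Γ) ⊆ range(ρ^Γ); consequently ρ is not extreme among PPT states. -/
open Matrix
open scoped ComplexOrder

/-- Partial transpose with respect to the A system (in the standard basis). -/
noncomputable def ptranspose {M N : ℕ} (ρ : Matrix (Fin M × Fin N) (Fin M × Fin N) ℂ) :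
    Matrix (Fin M × Fin N) (Fin M × Fin N) ℂ :=
  Matrix.of fun p q => ρ (q.1, p.2) (p.1, q.2)

/-- Partial trace over the A system: the reduced operator ρ_B. -/
noncomputable def ptraceA {M N : ℕ} (ρ : Matrix (Fin M × Fin N) (Fin M × Fin N) ℂ) :
    Matrix (Fin N) (Fin N) ℂ :=
  Matrix.of fun j l => ∑ i, ρ (i, j) (i, l)

/-- Partial trace over the B system: the reduced operator ρ_A. -/
noncomputable def ptraceB {M N : ℕ} (ρ : Matrix (Fin M × Fin N) (Fin M × Fin N) ℂ) :
    Matrix (Fin M) (Fin M) ℂ :=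
  Matrix.of fun i k => ∑ j, ρ (i, j) (k, j)

section Helpers

variable {n : Type*} [Fintype n] [DecidableEq n]

lemma herm_dot_real {A : Matrix n n ℂ} (hA : A.IsHermitian) (x : n → ℂ) :
    star (star x ⬝ᵥ A *ᵥ x) = star x ⬝ᵥ A *ᵥ x := by
  conv_lhs => rw [star_dotProduct, star_star, star_mulVec, ← dotProduct_mulVec, hA.eq]

lemma herm_dot_re {A : Matrix n n ℂ} (hA : A.IsHermitian) (x : n → ℂ) :
    star x ⬝ᵥ A *ᵥ x = ((star x ⬝ᵥ A *ᵥ x).re : ℂ) :=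
  (Complex.conj_eq_iff_re.mp (herm_dot_real hA x)).symm

set_option linter.unusedSectionVars false

set_option maxHeartbeats 1000000 in
lemma exists_smul_sub_posSemidef {ρ H : Matrix n n ℂ} (hρ : ρ.PosSemidef)
    (hH : H.IsHermitian)
    (hran : LinearMap.range H.mulVecLin ≤ LinearMap.range ρ.mulVecLin) :
    ∃ c : ℝ, 0 < c ∧ ((c : ℂ) • ρ - H).PosSemidef := by
  by_cases hH0 : H = 0
  · exact ⟨1, one_pos, by simpa [hH0] using hρ⟩
  have hA := hρ.1
  set U : Matrix n n ℂ := (hA.eigenvectorUnitary : Matrix n n ℂ) with hU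
  set μ : n → ℝ := hA.eigenvalues with hμ
  set D : Matrix n n ℂ := Matrix.diagonal (RCLike.ofReal ∘ μ) with hD
  have hU1 : star U * U = 1 := mem_unitaryGroup_iff'.mp (hA.eigenvectorUnitary).2
  have hU2 : U * star U = 1 := mem_unitaryGroup_iff.mp (hA.eigenvectorUnitary).2
  have spec : ρ = U * D * star U := hA.spectral_theorem
  set K : Matrix n n ℂ := star U * H * U with hKdef
  have hKH : H = U * K * star U := by
    rw [hKdef]
    calc H = (U * star U) * H * (U * star U) := by rw [hU2, one_mul, mul_one]
    _ = U * (star U * H * U) * star U := by noncomm_ring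
  have hKherm : K.IsHermitian := by
    show Kᴴ = K
    rw [hKdef]
    simp [Matrix.conjTranspose_mul, Matrix.star_eq_conjTranspose, hH.eq, Matrix.mul_assoc]
  have hKrange : ∀ u : n → ℂ, ∃ w : n → ℂ, K *ᵥ u = D *ᵥ w := by
    intro u
    have hmem : H.mulVecLin (U *ᵥ u) ∈ LinearMap.range ρ.mulVecLin :=
      hran (LinearMap.mem_range_self _ _)
    obtain ⟨w', hw'⟩ := hmem
    refine ⟨star U *ᵥ w', ?_⟩
    have h1 : K *ᵥ u = star U *ᵥ (H *ᵥ (U *ᵥ u)) := by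
      rw [mulVec_mulVec, mulVec_mulVec]
    rw [h1]
    have hw'' : ρ *ᵥ w' = H *ᵥ (U *ᵥ u) := hw'
    rw [← hw'', spec]
    simp only [← mulVec_mulVec]
    rw [mulVec_mulVec, hU1, one_mulVec]
  have hKcol : ∀ j k, μ j = 0 → K j k = 0 := by
    intro j k hjk
    obtain ⟨w, hw⟩ := hKrange (Pi.single k 1)
    have h1 : (K *ᵥ Pi.single k 1) j = K j k := by
      rw [mulVec_single]; simp
    have h2 : (D *ᵥ w) j = (μ j : ℂ) * w j := by
      rw [hD, mulVec_diagonal]; rfl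
    rw [hw, h2, hjk] at h1
    simpa using h1.symm
  have hKrow : ∀ j k, μ k = 0 → K j k = 0 := by
    intro j k hk
    have := hKherm.eq
    have h1 : K j k = star (K k j) := by
      conv_lhs => rw [← hKherm.eq]
      rfl
    rw [h1, hKcol k j hk, star_zero]
  set T : Finset n := Finset.univ.filter (fun k => μ k ≠ 0) with hT
  have hTne : T.Nonempty := by
    by_contra hTe
    rw [Finset.not_nonempty_iff_eq_empty] at hTe
    have hmu : ∀ k, μ k = 0 := by
      intro k
      by_contra hk
      have : k ∈ T := by simp [hT, hk]
      simp [hTe] at this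
    have hD0 : D = 0 := by
      rw [hD]; ext i j
      by_cases hij : i = j
      · subst hij; simp [Matrix.diagonal_apply_eq, hmu]
      · simp [Matrix.diagonal_apply_ne _ hij]
    have hρz : ρ = 0 := by rw [spec, hD0]; simp
    have hr0 : LinearMap.range ρ.mulVecLin = ⊥ := by
      rw [hρz, Matrix.mulVecLin_zero, LinearMap.range_zero]
    have hH00 : H = 0 := by
      ext i j
      have h0 : H.mulVecLin (Pi.single j 1) = 0 := by
        have hmem := hran (LinearMap.mem_range_self _ (Pi.single j 1))
        rw [hr0] at hmem; simpa using hmem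
      have := congrFun h0 i
      simpa [Matrix.mulVecLin_apply, Matrix.mulVec_single] using this
    exact hH0 hH00
  set m : ℝ := T.inf' hTne μ with hm
  have hmpos : 0 < m := by
    rw [hm, Finset.lt_inf'_iff]
    intro b hb
    have hb' : μ b ≠ 0 := by simpa [hT] using hb
    exact lt_of_le_of_ne (hρ.eigenvalues_nonneg b) (Ne.symm hb')
  set C : ℝ := ∑ j, ∑ k, ‖K j k‖ with hC
  have hC0 : 0 ≤ C :=
    Finset.sum_nonneg fun _ _ => Finset.sum_nonneg fun _ _ => norm_nonneg _
  refine ⟨(C + 1) / m, div_pos (by linarith) hmpos, ?_⟩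
  set c : ℝ := (C + 1) / m with hc
  have hcm : c * m = C + 1 := div_mul_cancel₀ _ (ne_of_gt hmpos)
  have hc0 : 0 ≤ c := le_of_lt (div_pos (by linarith) hmpos)
  refine Matrix.PosSemidef.of_dotProduct_mulVec_nonneg ?_ ?_
  · have h1 : ((c:ℂ) • ρ).IsHermitian := by
      show ((c:ℂ) • ρ)ᴴ = _
      rw [Matrix.conjTranspose_smul, RCLike.star_def, Complex.conj_ofReal, hρ.1.eq]
    exact h1.sub hH
  · intro x
    set y : n → ℂ := star U *ᵥ x with hy
    have hystar : star y = star x ᵥ* U := by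
      rw [hy, star_mulVec, Matrix.star_eq_conjTranspose, conjTranspose_conjTranspose]
    set R : ℝ := ∑ k, μ k * Complex.normSq (y k) with hR
    have qρ : star x ⬝ᵥ ρ *ᵥ x = (R : ℂ) := by
      rw [spec]
      simp only [← mulVec_mulVec, ← hy]
      rw [dotProduct_mulVec, ← hystar, hR, hD]
      push_cast
      rw [dotProduct]
      refine Finset.sum_congr rfl fun k _ => ?_
      rw [mulVec_diagonal]
      have : (starRingEnd ℂ) (y k) * y k = (Complex.normSq (y k) : ℂ) :=
        Complex.normSq_eq_conj_mul_self.symm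
      calc star (y k) * ((RCLike.ofReal ∘ μ) k * y k)
          = (μ k : ℂ) * ((starRingEnd ℂ) (y k) * y k) := by
            simp [RCLike.star_def, Function.comp]; ring
        _ = (μ k : ℂ) * (Complex.normSq (y k) : ℂ) := by rw [this]
    have qH : star x ⬝ᵥ H *ᵥ x = star y ⬝ᵥ K *ᵥ y := by
      rw [hKH]
      simp only [← mulVec_mulVec, ← hy]
      rw [dotProduct_mulVec, ← hystar]
    set Q : ℝ := ∑ k ∈ T, Complex.normSq (y k) with hQ
    have hQ0 : 0 ≤ Q := Finset.sum_nonneg fun _ _ => Complex.normSq_nonneg _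
    have hQle : ∀ k ∈ T, Complex.normSq (y k) ≤ Q := fun k hk =>
      Finset.single_le_sum (fun i _ => Complex.normSq_nonneg _) hk
    have hterm : ∀ j k, ‖star (y j) * (K j k * y k)‖ ≤ ‖K j k‖ * Q := by
      intro j k
      by_cases hjk : K j k = 0
      · simp [hjk]
      · have hj : j ∈ T := by
          simp only [hT, Finset.mem_filter, Finset.mem_univ, true_and]
          exact fun h => hjk (hKcol j k h)
        have hkT : k ∈ T := by
          simp only [hT, Finset.mem_filter, Finset.mem_univ, true_and]
          exact fun h => hjk (hKrow j k h)
        have haj : ‖y j‖ ^ 2 ≤ Q := by rw [Complex.sq_norm]; exact hQle j hj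
        have hak : ‖y k‖ ^ 2 ≤ Q := by rw [Complex.sq_norm]; exact hQle k hkT
        have hyy : ‖y j‖ * ‖y k‖ ≤ Q := by
          nlinarith [norm_nonneg (y j), norm_nonneg (y k),
            sq_nonneg (‖y j‖ - ‖y k‖)]
        calc ‖star (y j) * (K j k * y k)‖
            = ‖K j k‖ * (‖y j‖ * ‖y k‖) := by
              simp only [norm_mul, norm_star]; ring
          _ ≤ ‖K j k‖ * Q :=
              mul_le_mul_of_nonneg_left hyy (norm_nonneg _)
    have habs : (star x ⬝ᵥ H *ᵥ x).re ≤ C * Q := by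
      have h1 : (star x ⬝ᵥ H *ᵥ x).re ≤ ‖star y ⬝ᵥ K *ᵥ y‖ := by
        rw [qH]; exact Complex.re_le_norm _
      refine le_trans h1 ?_
      have h2 : star y ⬝ᵥ K *ᵥ y = ∑ j, ∑ k, star (y j) * (K j k * y k) := by
        rw [dotProduct]
        refine Finset.sum_congr rfl fun j _ => ?_
        rw [show (K *ᵥ y) j = ∑ k, K j k * y k from rfl, Finset.mul_sum]
        rfl
      rw [h2]
      calc ‖∑ j, ∑ k, star (y j) * (K j k * y k)‖
          ≤ ∑ j, ‖∑ k, star (y j) * (K j k * y k)‖ := norm_sum_le _ _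
        _ ≤ ∑ j, ∑ k, ‖star (y j) * (K j k * y k)‖ :=
            Finset.sum_le_sum fun j _ => norm_sum_le _ _
        _ ≤ ∑ j, ∑ k, ‖K j k‖ * Q :=
            Finset.sum_le_sum fun j _ => Finset.sum_le_sum fun k _ => hterm j k
        _ = C * Q := by rw [hC, Finset.sum_mul]; exact Finset.sum_congr rfl fun j _ => (Finset.sum_mul _ _ _).symm
    have hRlow : m * Q ≤ R := by
      have h1 : ∑ k ∈ T, m * Complex.normSq (y k) ≤ ∑ k ∈ T, μ k * Complex.normSq (y k) :=
        Finset.sum_le_sum fun k hk =>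
          mul_le_mul_of_nonneg_right (Finset.inf'_le _ hk) (Complex.normSq_nonneg _)
      have h2 : ∑ k ∈ T, μ k * Complex.normSq (y k) ≤ R :=
        Finset.sum_le_sum_of_subset_of_nonneg (Finset.subset_univ T)
          (fun k _ _ => mul_nonneg (hρ.eigenvalues_nonneg k) (Complex.normSq_nonneg _))
      calc m * Q = ∑ k ∈ T, m * Complex.normSq (y k) := by rw [hQ, Finset.mul_sum]
        _ ≤ R := le_trans h1 h2
    have key : (star x ⬝ᵥ H *ᵥ x).re ≤ c * R := by
      calc (star x ⬝ᵥ H *ᵥ x).re ≤ C * Q := habs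
        _ ≤ (C + 1) * Q := by nlinarith
        _ = c * (m * Q) := by rw [← hcm]; ring
        _ ≤ c * R := mul_le_mul_of_nonneg_left hRlow hc0
    have expand : star x ⬝ᵥ ((c:ℂ) • ρ - H) *ᵥ x
        = (c:ℂ) * (star x ⬝ᵥ ρ *ᵥ x) - star x ⬝ᵥ H *ᵥ x := by
      rw [sub_mulVec, dotProduct_sub, smul_mulVec, dotProduct_smul, smul_eq_mul]
    rw [expand, qρ, herm_dot_re hH x]
    have hcast : (c:ℂ) * (R:ℂ) - (((star x ⬝ᵥ H *ᵥ x).re : ℝ) : ℂ)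
        = ((c * R - (star x ⬝ᵥ H *ᵥ x).re : ℝ) : ℂ) := by push_cast; ring
    rw [hcast, ← Complex.ofReal_zero, Complex.real_le_real]
    linarith [key]


open Module

lemma posSemidef_ofReal_smul {c : ℝ} (hc : 0 ≤ c) {A : Matrix n n ℂ} (hA : A.PosSemidef) :
    ((c : ℂ) • A).PosSemidef := by
  refine Matrix.PosSemidef.of_dotProduct_mulVec_nonneg ?_ ?_
  · show _ᴴ = _
    rw [Matrix.conjTranspose_smul, RCLike.star_def, Complex.conj_ofReal, hA.1.eq]
  · intro x
    rw [smul_mulVec, dotProduct_smul, smul_eq_mul]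
    have h := hA.dotProduct_mulVec_nonneg x
    rw [Complex.nonneg_iff] at h ⊢
    constructor
    · simp only [Complex.mul_re, Complex.ofReal_re, Complex.ofReal_im]
      nlinarith [h.1]
    · simp only [Complex.mul_im, Complex.ofReal_re, Complex.ofReal_im, ← h.2]
      ring

lemma posSemidef_smul_sub_mono {ρ H : Matrix n n ℂ} (hρ : ρ.PosSemidef) {c c' : ℝ}
    (hcc : c ≤ c') (h : ((c : ℂ) • ρ - H).PosSemidef) : ((c' : ℂ) • ρ - H).PosSemidef := by
  have h2 : (((c' - c : ℝ) : ℂ) • ρ).PosSemidef := posSemidef_ofReal_smul (by linarith) hρ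
  have heq : ((c' - c : ℝ) : ℂ) • ρ + ((c : ℂ) • ρ - H) = (c' : ℂ) • ρ - H := by
    push_cast
    module
  exact heq ▸ (h2.add h)

/-- left cancellation by a matrix with injective `mulVec`. -/
lemma mul_eq_zero_of_mulVec_inj {m o : Type*} [Fintype m]
    {A : Matrix n m ℂ} (hA : ∀ u, A *ᵥ u = 0 → u = 0) (X : Matrix m o ℂ) (h : A * X = 0) :
    X = 0 := by
  ext k j
  have hcol : A *ᵥ (fun k => X k j) = 0 := by
    funext i
    have := congrFun (congrFun h i) j
    simpa [Matrix.mul_apply, Matrix.mulVec, dotProduct] using this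
  have := congrFun (hA _ hcol) k
  simpa using this

/-- The real submodule of Hermitian matrices with range contained in `V`. -/
noncomputable def hermOfRange (V : Submodule ℂ (n → ℂ)) : Submodule ℝ (Matrix n n ℂ) where
  carrier := {A | A.IsHermitian ∧ LinearMap.range A.mulVecLin ≤ V}
  add_mem' := by
    rintro A B ⟨hA1, hA2⟩ ⟨hB1, hB2⟩
    refine ⟨hA1.add hB1, ?_⟩
    rintro v ⟨u, rfl⟩
    have : (A + B).mulVecLin u = A *ᵥ u + B *ᵥ u := by
      rw [Matrix.mulVecLin_apply, Matrix.add_mulVec]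
    rw [this]
    exact V.add_mem (hA2 (LinearMap.mem_range_self _ u)) (hB2 (LinearMap.mem_range_self _ u))
  zero_mem' := ⟨isHermitian_zero, by rw [Matrix.mulVecLin_zero, LinearMap.range_zero]; exact bot_le⟩
  smul_mem' := by
    rintro t A ⟨hA1, hA2⟩
    refine ⟨?_, ?_⟩
    · show _ᴴ = _
      rw [Matrix.conjTranspose_smul, star_trivial, hA1.eq]
    · rintro v ⟨u, rfl⟩
      have : (t • A).mulVecLin u = (t : ℂ) • (A *ᵥ u) := by
        rw [Matrix.mulVecLin_apply, smul_mulVec]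
        ext i
        simp [Complex.real_smul]
      rw [this]
      exact V.smul_mem _ (hA2 (LinearMap.mem_range_self _ u))

lemma mem_hermOfRange {V : Submodule ℂ (n → ℂ)} {A : Matrix n n ℂ} :
    A ∈ hermOfRange V ↔ A.IsHermitian ∧ LinearMap.range A.mulVecLin ≤ V := Iff.rfl

lemma finrank_hermOfRange_top_le :
    finrank ℝ (hermOfRange (⊤ : Submodule ℂ (n → ℂ))) ≤ Fintype.card n ^ 2 := by
  set F : Matrix n n ℂ →ₗ[ℝ] (n × n → ℝ) :=
    { toFun := fun A p => (A p.1 p.2).re + (A p.1 p.2).im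
      map_add' := by intro A B; funext p; simp; ring
      map_smul' := by
        intro t A; funext p
        simp [Complex.real_smul, Complex.mul_re, Complex.mul_im]
        ring } with hF
  have hinj : Function.Injective (F.comp (hermOfRange (⊤ : Submodule ℂ (n → ℂ))).subtype) := by
    intro a b hab
    apply Subtype.ext
    ext i j
    have h1 := congrFun hab (i, j)
    have h2 := congrFun hab (j, i)
    simp only [hF, LinearMap.comp_apply, LinearMap.coe_mk, AddHom.coe_mk,
      Submodule.coe_subtype] at h1 h2
    have hA : ((a : Matrix n n ℂ) j i).re = ((a : Matrix n n ℂ) i j).re ∧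
        ((a : Matrix n n ℂ) j i).im = -((a : Matrix n n ℂ) i j).im := by
      have he : (a : Matrix n n ℂ) j i = star ((a : Matrix n n ℂ) i j) := by
        conv_lhs => rw [← a.2.1.eq]
        rfl
      rw [he]; simp [Complex.star_def]
    have hB : ((b : Matrix n n ℂ) j i).re = ((b : Matrix n n ℂ) i j).re ∧
        ((b : Matrix n n ℂ) j i).im = -((b : Matrix n n ℂ) i j).im := by
      have he : (b : Matrix n n ℂ) j i = star ((b : Matrix n n ℂ) i j) := by
        conv_lhs => rw [← b.2.1.eq]
        rfl
      rw [he]; simp [Complex.star_def]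
    apply Complex.ext
    · rw [hA.1, hB.1] at h2; linarith
    · rw [hA.2, hB.2] at h2; linarith
  have hle := LinearMap.finrank_le_finrank_of_injective hinj
  calc finrank ℝ (hermOfRange (⊤ : Submodule ℂ (n → ℂ))) ≤ finrank ℝ (n × n → ℝ) := hle
    _ = Fintype.card n ^ 2 := by rw [Module.finrank_pi, Fintype.card_prod, sq]

lemma le_finrank_hermOfRange (V : Submodule ℂ (n → ℂ)) :
    finrank ℂ V ^ 2 ≤ finrank ℝ (hermOfRange V) := by
  set r := finrank ℂ V with hrdef
  let b : Basis (Fin r) ℂ V := Module.finBasis ℂ V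
  set A : Matrix n (Fin r) ℂ := Matrix.of (fun i k => (b k : n → ℂ) i) with hAdef
  have hAexp : ∀ u : Fin r → ℂ, A *ᵥ u = ((∑ k, u k • b k : V) : n → ℂ) := by
    intro u
    funext i
    simp only [Matrix.mulVec, dotProduct, hAdef, Matrix.of_apply]
    rw [show ((∑ k, u k • b k : V) : n → ℂ) i = ∑ k, u k * (b k : n → ℂ) i by
      induction' (Finset.univ : Finset (Fin r)) using Finset.induction with a s ha ih
      · simp
      · simp [Finset.sum_insert ha, ih]]
    exact Finset.sum_congr rfl fun k _ => mul_comm _ _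
  have hAmem : ∀ u : Fin r → ℂ, A *ᵥ u ∈ V := fun u => by rw [hAexp u]; exact (∑ k, u k • b k : V).2
  have hAinj : ∀ u, A *ᵥ u = 0 → u = 0 := by
    intro u hu
    have h0 : (∑ k, u k • b k : V) = 0 := by
      apply Subtype.val_injective
      rw [← hAexp u, hu]; rfl
    have hli := b.linearIndependent
    rw [linearIndependent_iff'] at hli
    funext k
    exact hli Finset.univ u h0 k (Finset.mem_univ k)
  -- The real-linear parametrization of Hermitian r×r matrices
  set E : (Fin r × Fin r → ℝ) → Matrix (Fin r) (Fin r) ℂ := fun cc =>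
    Matrix.of (fun j k => ((cc (j, k) + cc (k, j) : ℝ) : ℂ)
      + ((cc (j, k) - cc (k, j) : ℝ) : ℂ) * Complex.I) with hEdef
  have hEre : ∀ cc j k, (E cc j k).re = cc (j, k) + cc (k, j) := by
    intro cc j k; simp [hEdef]
  have hEim : ∀ cc j k, (E cc j k).im = cc (j, k) - cc (k, j) := by
    intro cc j k; simp [hEdef]
  have hEadd : ∀ a b', E (a + b') = E a + E b' := by
    intro a b'
    ext j k
    simp [hEdef]
    ring
  have hEsmul : ∀ (t : ℝ) a, E (t • a) = t • E a := by
    intro t a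
    ext j k
    simp [hEdef, Complex.real_smul]
    ring
  have hEherm : ∀ cc, (E cc).IsHermitian := by
    intro cc
    ext j k
    simp only [conjTranspose_apply, hEdef, Matrix.of_apply]
    apply Complex.ext <;> simp [Complex.star_def] <;> ring
  have hEinj : ∀ cc, E cc = 0 → cc = 0 := by
    intro cc h
    funext p
    obtain ⟨j, k⟩ := p
    have h1 := congrFun (congrFun h j) k
    have h2 : (E cc j k).re = 0 ∧ (E cc j k).im = 0 := by
      rw [h1]; simp
    rw [hEre, hEim] at h2
    have := h2.1; have := h2.2
    simp only [Pi.zero_apply]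
    linarith [h2.1, h2.2]
  have hmem : ∀ cc, (A * E cc * Aᴴ) ∈ hermOfRange V := by
    intro cc
    refine ⟨?_, ?_⟩
    · show _ᴴ = _
      rw [conjTranspose_mul, conjTranspose_mul, conjTranspose_conjTranspose,
        (hEherm cc).eq, Matrix.mul_assoc]
    · rintro v ⟨u, rfl⟩
      have : (A * E cc * Aᴴ).mulVecLin u = A *ᵥ ((E cc * Aᴴ) *ᵥ u) := by
        rw [Matrix.mulVecLin_apply, Matrix.mul_assoc, ← Matrix.mulVec_mulVec]
      rw [this]
      exact hAmem _
  set L : (Fin r × Fin r → ℝ) →ₗ[ℝ] hermOfRange V :=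
    { toFun := fun cc => ⟨A * E cc * Aᴴ, hmem cc⟩
      map_add' := by
        intro a b'
        apply Subtype.ext
        show A * E (a + b') * Aᴴ = A * E a * Aᴴ + A * E b' * Aᴴ
        rw [hEadd, Matrix.mul_add, Matrix.add_mul]
      map_smul' := by
        intro t a
        apply Subtype.ext
        show A * E (t • a) * Aᴴ = t • (A * E a * Aᴴ)
        rw [hEsmul, Matrix.mul_smul, Matrix.smul_mul] } with hLdef
  have hLinj : Function.Injective L := by
    intro a b' hab
    have h0 : A * (E a - E b') * Aᴴ = 0 := by
      have := congrArg Subtype.val hab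
      simp only [hLdef, LinearMap.coe_mk, AddHom.coe_mk] at this
      rw [Matrix.mul_sub, Matrix.sub_mul, this, sub_self]
    have hEsub : E a - E b' = E (a - b') := by
      ext j k
      simp [hEdef]
      ring
    have h1 : (E a - E b') * Aᴴ = 0 := by
      apply mul_eq_zero_of_mulVec_inj hAinj
      rw [← Matrix.mul_assoc]
      exact h0
    have h2 : A * (E a - E b')ᴴ = 0 := by
      have := congrArg Matrix.conjTranspose h1
      simpa [conjTranspose_mul, conjTranspose_conjTranspose] using this
    have h3 : (E a - E b')ᴴ = 0 := mul_eq_zero_of_mulVec_inj hAinj _ h2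
    have h4 : E (a - b') = 0 := by
      rw [← hEsub]
      have := congrArg Matrix.conjTranspose h3
      simpa using this
    exact sub_eq_zero.mp (hEinj _ h4)
  have := LinearMap.finrank_le_finrank_of_injective hLinj
  calc r ^ 2 = finrank ℝ (Fin r × Fin r → ℝ) := by
        rw [Module.finrank_pi, Fintype.card_prod, Fintype.card_fin, sq]
    _ ≤ finrank ℝ (hermOfRange V) := this

end Helpers

open Module

section PTranspose

variable {M N : ℕ}

lemma ptranspose_add (A B : Matrix (Fin M × Fin N) (Fin M × Fin N) ℂ) :
    ptranspose (A + B) = ptranspose A + ptranspose B := by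
  ext p q; simp [ptranspose]

lemma ptranspose_sub (A B : Matrix (Fin M × Fin N) (Fin M × Fin N) ℂ) :
    ptranspose (A - B) = ptranspose A - ptranspose B := by
  ext p q; simp [ptranspose]

lemma ptranspose_smul {R : Type*} [SMul R ℂ] (t : R)
    (A : Matrix (Fin M × Fin N) (Fin M × Fin N) ℂ) :
    ptranspose (t • A) = t • ptranspose A := by
  ext p q; simp [ptranspose]

lemma ptranspose_ptranspose (A : Matrix (Fin M × Fin N) (Fin M × Fin N) ℂ) :
    ptranspose (ptranspose A) = A := by
  ext p q; simp [ptranspose]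

lemma ptranspose_isHermitian {A : Matrix (Fin M × Fin N) (Fin M × Fin N) ℂ}
    (h : A.IsHermitian) : (ptranspose A).IsHermitian := by
  ext p q
  have := congrFun (congrFun h.eq (q.1, p.2)) (p.1, q.2)
  rw [conjTranspose_apply] at this
  simpa [ptranspose, conjTranspose_apply] using this

/-- Partial transpose as a real-linear equivalence. -/
noncomputable def ptransposeEquiv (M N : ℕ) :
    Matrix (Fin M × Fin N) (Fin M × Fin N) ℂ ≃ₗ[ℝ]
      Matrix (Fin M × Fin N) (Fin M × Fin N) ℂ where
  toFun := ptranspose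
  invFun := ptranspose
  left_inv := ptranspose_ptranspose
  right_inv := ptranspose_ptranspose
  map_add' := ptranspose_add
  map_smul' := fun t A => ptranspose_smul t A

end PTranspose

set_option maxHeartbeats 1000000 in
/-- Necessary condition for extremality: if ρ is a PPT state of birank (r,s)
with r² + s² > M²N² + 1, then there is a Hermitian H, not proportional to ρ,
with range H ⊆ range ρ and range H^Γ ⊆ range ρ^Γ; consequently ρ is not
extreme, i.e. ρ is a sum of two non-proportional PPT states. -/
theorem not_extreme_of_birank_large (M N : ℕ)
    (ρ : Matrix (Fin M × Fin N) (Fin M × Fin N) ℂ)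
    (hρ0 : ρ ≠ 0) (hρ : ρ.PosSemidef) (hρΓ : (ptranspose ρ).PosSemidef)
    (r s : ℕ) (hr : ρ.rank = r) (hs : (ptranspose ρ).rank = s)
    (hbig : M ^ 2 * N ^ 2 + 1 < r ^ 2 + s ^ 2) :
    (∃ H : Matrix (Fin M × Fin N) (Fin M × Fin N) ℂ,
      H.IsHermitian ∧ (¬ ∃ c : ℂ, H = c • ρ) ∧
      LinearMap.range H.mulVecLin ≤ LinearMap.range ρ.mulVecLin ∧
      LinearMap.range (ptranspose H).mulVecLin ≤
        LinearMap.range (ptranspose ρ).mulVecLin) ∧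
    ∃ ρ₁ ρ₂ : Matrix (Fin M × Fin N) (Fin M × Fin N) ℂ,
      ρ₁ ≠ 0 ∧ ρ₁.PosSemidef ∧ (ptranspose ρ₁).PosSemidef ∧
      ρ₂ ≠ 0 ∧ ρ₂.PosSemidef ∧ (ptranspose ρ₂).PosSemidef ∧
      ρ = ρ₁ + ρ₂ ∧ ¬ ∃ c : ℂ, ρ₁ = c • ρ₂ := by
  classical
  set V : Submodule ℂ (Fin M × Fin N → ℂ) := LinearMap.range ρ.mulVecLin with hV
  set V' : Submodule ℂ (Fin M × Fin N → ℂ) := LinearMap.range (ptranspose ρ).mulVecLin with hV'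
  set Y : Submodule ℝ (Matrix (Fin M × Fin N) (Fin M × Fin N) ℂ) := hermOfRange V with hYdef
  set Z : Submodule ℝ (Matrix (Fin M × Fin N) (Fin M × Fin N) ℂ) :=
    (hermOfRange V').map ((ptransposeEquiv M N).toLinearMap) with hZdef
  have hrV : finrank ℂ V = r := hr
  have hsV : finrank ℂ V' = s := hs
  have hYge : r ^ 2 ≤ finrank ℝ Y := by
    have := le_finrank_hermOfRange V
    rwa [hrV] at this
  have hZge : s ^ 2 ≤ finrank ℝ Z := by
    have h1 := le_finrank_hermOfRange V'
    have h2 : finrank ℝ Z = finrank ℝ (hermOfRange V') :=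
      LinearEquiv.finrank_map_eq (ptransposeEquiv M N) (hermOfRange V')
    rw [h2]
    rwa [hsV] at h1
  have hsup : finrank ℝ ↥(Y ⊔ Z) ≤ M ^ 2 * N ^ 2 := by
    have hle : Y ⊔ Z ≤ hermOfRange (⊤ : Submodule ℂ (Fin M × Fin N → ℂ)) := by
      apply sup_le
      · rintro a ⟨h1, _⟩
        exact ⟨h1, le_top⟩
      · rintro a ha
        obtain ⟨G, hG, rfl⟩ := Submodule.mem_map.mp ha
        exact ⟨ptranspose_isHermitian hG.1, le_top⟩
    calc finrank ℝ ↥(Y ⊔ Z)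
        ≤ finrank ℝ (hermOfRange (⊤ : Submodule ℂ (Fin M × Fin N → ℂ))) :=
          Submodule.finrank_mono hle
      _ ≤ Fintype.card (Fin M × Fin N) ^ 2 := finrank_hermOfRange_top_le
      _ = M ^ 2 * N ^ 2 := by
          rw [Fintype.card_prod, Fintype.card_fin, Fintype.card_fin]
          ring
  have hinf : 2 ≤ finrank ℝ ↥(Y ⊓ Z) := by
    have hsum := Submodule.finrank_sup_add_finrank_inf_eq Y Z
    linarith
  have hexH : ∃ H, H ∈ Y ⊓ Z ∧ ¬ ∃ c : ℂ, H = c • ρ := by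
    by_contra hcon
    push_neg at hcon
    have hle : (Y ⊓ Z : Submodule ℝ _) ≤ Submodule.span ℝ {ρ} := by
      intro H hH
      obtain ⟨c, hc⟩ := hcon H hH
      have hHh : H.IsHermitian := hH.1.1
      have h1 : (c • ρ)ᴴ = c • ρ := by rw [← hc]; exact hHh.eq
      rw [Matrix.conjTranspose_smul, hρ.1.eq, RCLike.star_def] at h1
      have h2 : ((starRingEnd ℂ) c - c) • ρ = 0 := by rw [sub_smul, h1, sub_self]
      have hcr : (starRingEnd ℂ) c = c :=
        sub_eq_zero.mp ((smul_eq_zero.mp h2).resolve_right hρ0)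
      have hcre : ((c.re : ℝ) : ℂ) = c := Complex.conj_eq_iff_re.mp hcr
      have hre : H = (c.re : ℝ) • ρ := by
        rw [hc]
        conv_lhs => rw [← hcre]
        ext i j
        simp [Complex.real_smul]
      exact Submodule.mem_span_singleton.mpr ⟨c.re, hre.symm⟩
    have hfin := Submodule.finrank_mono hle
    rw [finrank_span_singleton hρ0] at hfin
    omega
  obtain ⟨H, hHmem, hHnc⟩ := hexH
  obtain ⟨⟨hHherm, hHran⟩, hHZ⟩ := hHmem
  have hHran' : LinearMap.range (ptranspose H).mulVecLin ≤ V' := by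
    obtain ⟨G, hG, hGe⟩ := Submodule.mem_map.mp hHZ
    have hGH : ptranspose H = G := by
      rw [← hGe]
      exact ptranspose_ptranspose G
    rw [hGH]
    exact hG.2
  refine ⟨⟨H, hHherm, hHnc, hHran, hHran'⟩, ?_⟩
  have hnegran : LinearMap.range (-H).mulVecLin ≤ V := by
    rintro v ⟨u, rfl⟩
    have : (-H).mulVecLin u = H.mulVecLin (-u) := by
      rw [Matrix.mulVecLin_apply, Matrix.mulVecLin_apply, Matrix.neg_mulVec, Matrix.mulVec_neg]
    rw [this]
    exact hHran (LinearMap.mem_range_self _ _)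
  have hnegran' : LinearMap.range (-(ptranspose H)).mulVecLin ≤ V' := by
    rintro v ⟨u, rfl⟩
    have : (-(ptranspose H)).mulVecLin u = (ptranspose H).mulVecLin (-u) := by
      rw [Matrix.mulVecLin_apply, Matrix.mulVecLin_apply, Matrix.neg_mulVec, Matrix.mulVec_neg]
    rw [this]
    exact hHran' (LinearMap.mem_range_self _ _)
  obtain ⟨c1, hc1, hP1⟩ := exists_smul_sub_posSemidef hρ hHherm hHran
  obtain ⟨c2, hc2, hP2⟩ := exists_smul_sub_posSemidef hρ hHherm.neg hnegran
  obtain ⟨c3, hc3, hP3⟩ :=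
    exists_smul_sub_posSemidef hρΓ (ptranspose_isHermitian hHherm) hHran'
  obtain ⟨c4, hc4, hP4⟩ :=
    exists_smul_sub_posSemidef hρΓ (ptranspose_isHermitian hHherm).neg hnegran'
  set t : ℝ := max (max c1 c2) (max c3 c4) with ht
  have ht0 : 0 < t := lt_of_lt_of_le hc1 (le_trans (le_max_left _ _) (le_max_left _ _))
  have h2t : (2 * t : ℝ) ≠ 0 := by positivity
  have hQ1 : ((t : ℂ) • ρ - H).PosSemidef :=
    posSemidef_smul_sub_mono hρ (le_trans (le_max_left _ _) (le_max_left _ _)) hP1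
  have hQ2 : ((t : ℂ) • ρ + H).PosSemidef := by
    have := posSemidef_smul_sub_mono (c' := t) hρ
      (le_trans (le_max_right c1 c2) (le_max_left _ _)) hP2
    simpa [sub_neg_eq_add] using this
  have hQ3 : ((t : ℂ) • ptranspose ρ - ptranspose H).PosSemidef :=
    posSemidef_smul_sub_mono hρΓ (le_trans (le_max_left c3 c4) (le_max_right _ _)) hP3
  have hQ4 : ((t : ℂ) • ptranspose ρ + ptranspose H).PosSemidef := by
    have := posSemidef_smul_sub_mono (c' := t) hρΓ
      (le_trans (le_max_right c3 c4) (le_max_right _ _)) hP4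
    simpa [sub_neg_eq_add] using this
  refine ⟨(((2 * t : ℝ)⁻¹ : ℝ) : ℂ) • ((t : ℂ) • ρ + H),
    (((2 * t : ℝ)⁻¹ : ℝ) : ℂ) • ((t : ℂ) • ρ - H), ?_, ?_, ?_, ?_, ?_, ?_, ?_, ?_⟩
  · intro h
    have h0 : (t : ℂ) • ρ + H = 0 :=
      (smul_eq_zero.mp h).resolve_left
        (Complex.ofReal_ne_zero.mpr (inv_ne_zero h2t))
    exact hHnc ⟨-(t : ℂ), by rw [neg_smul]; exact eq_neg_of_add_eq_zero_right h0⟩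
  · exact posSemidef_ofReal_smul (by positivity) hQ2
  · rw [ptranspose_smul, ptranspose_add, ptranspose_smul]
    exact posSemidef_ofReal_smul (by positivity) hQ4
  · intro h
    have h0 : (t : ℂ) • ρ - H = 0 :=
      (smul_eq_zero.mp h).resolve_left
        (Complex.ofReal_ne_zero.mpr (inv_ne_zero h2t))
    exact hHnc ⟨(t : ℂ), (sub_eq_zero.mp h0).symm⟩
  · exact posSemidef_ofReal_smul (by positivity) hQ1
  · rw [ptranspose_smul, ptranspose_sub, ptranspose_smul]
    exact posSemidef_ofReal_smul (by positivity) hQ3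
  · rw [← smul_add]
    have h1 : ((t : ℂ) • ρ + H) + ((t : ℂ) • ρ - H) = ((2 * t : ℝ) : ℂ) • ρ := by
      push_cast
      module
    rw [h1, smul_smul, ← Complex.ofReal_mul, inv_mul_cancel₀ h2t, Complex.ofReal_one, one_smul]
  · rintro ⟨e, he⟩
    have key : ∀ (X : Matrix (Fin M × Fin N) (Fin M × Fin N) ℂ),
        ((2 * t : ℝ) : ℂ) • ((((2 * t : ℝ)⁻¹ : ℝ) : ℂ) • X) = X := by
      intro X
      rw [smul_smul, ← Complex.ofReal_mul, mul_inv_cancel₀ h2t, Complex.ofReal_one, one_smul]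
    have h1 := congrArg (fun X => ((2 * t : ℝ) : ℂ) • X) he
    rw [key, smul_comm ((2 * t : ℝ) : ℂ) e, key] at h1
    by_cases he1 : e = -1
    · rw [he1] at h1
      have h2 : ((2 * t : ℝ) : ℂ) • ρ = 0 := by
        push_cast
        have := h1
        calc ((2:ℂ) * (t:ℂ)) • ρ
            = ((t : ℂ) • ρ + H) - (-1 : ℂ) • ((t : ℂ) • ρ - H) := by module
          _ = 0 := by rw [this]; simp
      rw [smul_eq_zero] at h2
      exact hρ0 (h2.resolve_left (Complex.ofReal_ne_zero.mpr h2t))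
    · apply hHnc
      have hne : (1 + e) ≠ 0 := fun h => he1 (by linear_combination h)
      have h3 : (1 + e) • H = ((e - 1) * (t : ℂ)) • ρ := by
        calc (1 + e) • H = (((t : ℂ) • ρ + H) + e • H) - (t : ℂ) • ρ := by module
          _ = ((e • ((t : ℂ) • ρ - H)) + e • H) - (t : ℂ) • ρ := by rw [h1]
          _ = ((e - 1) * (t : ℂ)) • ρ := by module
      refine ⟨(e - 1) * (t : ℂ) / (1 + e), ?_⟩
      calc H = (1 + e)⁻¹ • ((1 + e) • H) := by
            rw [smul_smul, inv_mul_cancel₀ hne, one_smul]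
        _ = (1 + e)⁻¹ • (((e - 1) * (t : ℂ)) • ρ) := by rw [h3]
        _ = ((e - 1) * (t : ℂ) / (1 + e)) • ρ := by
            rw [smul_smul]
            congr 1
            rw [div_eq_inv_mul]
end

section
/- Let σ be a strongly extreme PPT state, i.e., there is no PPT state ρ ≠ λσ (for any λ>0) with range(ρ) = range(σ). Then: (i) any PPT state ρ with range(ρ) ⊆ range(σ) is a positive scalar multiple of σ; (ii) if rank σ > 1 then the range of σ contains no nonzero product vector. -/
open Matrix
open scoped ComplexOrder InnerProductSpace

section Helpers

variable {n : Type*} [Fintype n] [DecidableEq n]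

lemma herm_mem_range {A : Matrix n n ℂ} (hA : A.IsHermitian) {v : n → ℂ}
    (h : ∀ w, A *ᵥ w = 0 → star w ⬝ᵥ v = 0) :
    v ∈ LinearMap.range A.mulVecLin := by
  set T := Matrix.toEuclideanLin A with hT
  have hsym : T.IsSymmetric := Matrix.isHermitian_iff_isSymmetric.mp hA
  have horth : (LinearMap.range T)ᗮ = LinearMap.ker T := by
    ext x
    simp only [Submodule.mem_orthogonal, LinearMap.mem_ker, LinearMap.mem_range,
      forall_exists_index]
    constructor
    · intro hx
      have h1 : ⟪T x, T x⟫_ℂ = 0 := by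
        have h2 := hx (T (T x)) (T x) rfl
        rwa [hsym (T x) x] at h2
      exact inner_self_eq_zero.mp h1
    · intro hx y z hz
      subst hz
      rw [hsym z x, hx, inner_zero_right]
  have hrange : LinearMap.range T = (LinearMap.ker T)ᗮ := by
    rw [← horth, Submodule.orthogonal_orthogonal]
  have hv' : (WithLp.equiv 2 (n → ℂ)).symm v ∈ (LinearMap.ker T)ᗮ := by
    intro w hw
    have hw0 : A *ᵥ (WithLp.equiv 2 (n → ℂ)) w = 0 := by
      have := congrArg (WithLp.equiv 2 (n → ℂ)) (LinearMap.mem_ker.mp hw)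
      exact this
    have := h _ hw0
    simpa [PiLp.inner_apply, RCLike.inner_apply, dotProduct, mul_comm] using this
  rw [← hrange] at hv'
  obtain ⟨u, hu⟩ := hv'
  refine ⟨(WithLp.equiv 2 (n → ℂ)) u, ?_⟩
  have := congrArg (WithLp.equiv 2 (n → ℂ)) hu
  change A *ᵥ (WithLp.equiv 2 (n → ℂ)) u = v at this
  simpa [Matrix.mulVecLin_apply] using this

omit [DecidableEq n] in
lemma psd_add_ker {A B : Matrix n n ℂ} (hA : A.PosSemidef) (hB : B.PosSemidef)
    {w : n → ℂ} (hw : (A + B) *ᵥ w = 0) : A *ᵥ w = 0 := by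
  have h0 : star w ⬝ᵥ A *ᵥ w + star w ⬝ᵥ B *ᵥ w = 0 := by
    rw [← dotProduct_add, ← add_mulVec, hw, dotProduct_zero]
  have ha := hA.dotProduct_mulVec_nonneg w
  have hb := hB.dotProduct_mulVec_nonneg w
  have hle : star w ⬝ᵥ A *ᵥ w ≤ 0 := by
    rw [eq_neg_of_add_eq_zero_left h0]
    exact neg_nonpos.mpr hb
  have : star w ⬝ᵥ A *ᵥ w = 0 := le_antisymm hle ha
  exact (hA.dotProduct_mulVec_zero_iff w).mp this

lemma zero_of_forall_mulVec {A : Matrix n n ℂ} (h : ∀ x, A *ᵥ x = 0) : A = 0 := by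
  ext i j
  have := congrFun (h (Pi.single j 1)) i
  simpa [mulVec_single] using this

lemma psd_range_add {A B : Matrix n n ℂ} (hA : A.PosSemidef) (hB : B.PosSemidef) :
    LinearMap.range A.mulVecLin ≤ LinearMap.range (A + B).mulVecLin := by
  rintro v ⟨u, rfl⟩
  apply herm_mem_range (hA.1.add hB.1)
  intro w hw
  have hAw : A *ᵥ w = 0 := psd_add_ker hA hB hw
  have : star w ᵥ* A = 0 := by
    have := congrArg star hAw
    rwa [star_mulVec, hA.1.eq, star_zero] at this
  rw [Matrix.mulVecLin_apply, dotProduct_mulVec, this, zero_dotProduct]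

omit [DecidableEq n] in
lemma outer_mulVec (v x : n → ℂ) :
    (Matrix.of fun p q => v p * star (v q)) *ᵥ x = (star v ⬝ᵥ x) • v := by
  funext p
  simp only [mulVec, dotProduct, Matrix.of_apply, Pi.smul_apply, smul_eq_mul, Pi.star_apply]
  rw [Finset.sum_mul]
  apply Finset.sum_congr rfl
  intro q _
  ring

omit [DecidableEq n] in
lemma outer_posSemidef (v : n → ℂ) :
    (Matrix.of fun p q => v p * star (v q)).PosSemidef := by
  refine Matrix.PosSemidef.of_dotProduct_mulVec_nonneg ?_ ?_
  · ext p q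
    simp only [conjTranspose_apply, Matrix.of_apply, star_mul', star_star]
    ring
  · intro x
    rw [outer_mulVec, dotProduct_smul, smul_eq_mul]
    have hs : star x ⬝ᵥ v = star (star v ⬝ᵥ x) := by
      simp [dotProduct, Finset.sum_comm, mul_comm]
    rw [hs]
    exact mul_star_self_nonneg _

end Helpers

/-- Basic properties of strongly extreme states: (i) any PPT state whose range
is contained in the range of σ is a positive multiple of σ; (ii) if rank σ > 1
then the range of σ contains no nonzero product vector. -/
theorem stronglyExtreme_props (M N : ℕ)
    (σ : Matrix (Fin M × Fin N) (Fin M × Fin N) ℂ)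
    (hσ0 : σ ≠ 0) (hσ : σ.PosSemidef) (hσΓ : (ptranspose σ).PosSemidef)
    (hstrong : ∀ ρ : Matrix (Fin M × Fin N) (Fin M × Fin N) ℂ,
      ρ ≠ 0 → ρ.PosSemidef → (ptranspose ρ).PosSemidef →
      LinearMap.range ρ.mulVecLin = LinearMap.range σ.mulVecLin →
      ∃ l : ℝ, 0 < l ∧ ρ = (l : ℂ) • σ) :
    (∀ ρ : Matrix (Fin M × Fin N) (Fin M × Fin N) ℂ,
      ρ ≠ 0 → ρ.PosSemidef → (ptranspose ρ).PosSemidef →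
      LinearMap.range ρ.mulVecLin ≤ LinearMap.range σ.mulVecLin →
      ∃ l : ℝ, 0 < l ∧ ρ = (l : ℂ) • σ) ∧
    (1 < σ.rank → ∀ (a : Fin M → ℂ) (b : Fin N → ℂ),
      (fun p : Fin M × Fin N => a p.1 * b p.2) ≠ 0 →
      (fun p : Fin M × Fin N => a p.1 * b p.2) ∉ LinearMap.range σ.mulVecLin) := by
  have part1 : ∀ ρ : Matrix (Fin M × Fin N) (Fin M × Fin N) ℂ,
      ρ ≠ 0 → ρ.PosSemidef → (ptranspose ρ).PosSemidef →
      LinearMap.range ρ.mulVecLin ≤ LinearMap.range σ.mulVecLin →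
      ∃ l : ℝ, 0 < l ∧ ρ = (l : ℂ) • σ := by
    intro ρ hρ0 hρ hρΓ hle
    have hτpsd : (ρ + σ).PosSemidef := hρ.add hσ
    have hτΓ : (ptranspose (ρ + σ)).PosSemidef := by
      have heq : ptranspose (ρ + σ) = ptranspose ρ + ptranspose σ := by
        ext p q; simp [ptranspose]
      rw [heq]; exact hρΓ.add hσΓ
    have hτ0 : ρ + σ ≠ 0 := by
      intro h0
      apply hσ0
      apply zero_of_forall_mulVec
      intro x
      exact psd_add_ker hσ hρ (w := x) (by rw [add_comm, h0, zero_mulVec])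
    have hrange : LinearMap.range (ρ + σ).mulVecLin = LinearMap.range σ.mulVecLin := by
      apply le_antisymm
      · rintro v ⟨u, rfl⟩
        have heq : (ρ + σ).mulVecLin u = ρ.mulVecLin u + σ.mulVecLin u := by
          simp [Matrix.mulVecLin_apply, add_mulVec]
        rw [heq]
        exact Submodule.add_mem _ (hle ⟨u, rfl⟩) ⟨u, rfl⟩
      · have h := psd_range_add hσ hρ
        rwa [add_comm σ ρ] at h
    obtain ⟨l, hl, hlσ⟩ := hstrong (ρ + σ) hτ0 hτpsd hτΓ hrange
    have hρσ : ρ = ((l - 1 : ℝ) : ℂ) • σ := by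
      push_cast
      rw [sub_smul, one_smul, ← hlσ]
      abel
    have hx : ∃ x, σ *ᵥ x ≠ 0 := by
      by_contra hc
      push_neg at hc
      exact hσ0 (zero_of_forall_mulVec hc)
    obtain ⟨x, hx⟩ := hx
    have hσx : (0 : ℂ) < star x ⬝ᵥ σ *ᵥ x :=
      lt_of_le_of_ne (hσ.dotProduct_mulVec_nonneg x)
        (fun h => hx ((hσ.dotProduct_mulVec_zero_iff x).mp h.symm))
    have hρx : (0 : ℂ) ≤ star x ⬝ᵥ ρ *ᵥ x := hρ.dotProduct_mulVec_nonneg x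
    have hge : (1 : ℝ) ≤ l := by
      by_contra hlt
      push_neg at hlt
      have hcalc : star x ⬝ᵥ ρ *ᵥ x = ((l - 1 : ℝ) : ℂ) * (star x ⬝ᵥ σ *ᵥ x) := by
        rw [hρσ, Matrix.smul_mulVec, dotProduct_smul, smul_eq_mul]
      have hneg : star x ⬝ᵥ ρ *ᵥ x < 0 := by
        rw [hcalc]
        apply mul_neg_of_neg_of_pos ?_ hσx
        have : (l - 1 : ℝ) < 0 := by linarith
        exact_mod_cast this
      exact absurd hneg hρx.not_gt
    have hne : l ≠ 1 := by
      intro h1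
      apply hρ0
      rw [hρσ, h1]
      simp
    exact ⟨l - 1, sub_pos.mpr (lt_of_le_of_ne hge (Ne.symm hne)), hρσ⟩
  refine ⟨part1, ?_⟩
  intro hrank a b hv0 hv
  set v : Fin M × Fin N → ℂ := fun p => a p.1 * b p.2 with hvdef
  set ρ : Matrix (Fin M × Fin N) (Fin M × Fin N) ℂ :=
    Matrix.of fun p q => v p * star (v q) with hρdef
  have hρpsd : ρ.PosSemidef := outer_posSemidef v
  have hρΓ : (ptranspose ρ).PosSemidef := by
    set w : Fin M × Fin N → ℂ := fun p => star (a p.1) * b p.2 with hwdef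
    have heq : ptranspose ρ = Matrix.of fun p q => w p * star (w q) := by
      ext p q
      simp only [ptranspose, Matrix.of_apply, hρdef, hvdef, hwdef, Pi.star_apply,
        star_mul', star_star]
      ring
    rw [heq]
    exact outer_posSemidef w
  have hρ0 : ρ ≠ 0 := by
    obtain ⟨p, hp⟩ := Function.ne_iff.mp hv0
    intro h0
    have := congrFun (congrFun h0 p) p
    simp only [hρdef, Matrix.of_apply, Matrix.zero_apply] at this
    exact hp (by simpa using (mul_eq_zero.mp this).elim id (fun h => star_eq_zero.mp h))
  have hρle : LinearMap.range ρ.mulVecLin ≤ LinearMap.range σ.mulVecLin := by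
    rintro x ⟨u, rfl⟩
    rw [Matrix.mulVecLin_apply, hρdef, outer_mulVec]
    exact Submodule.smul_mem _ _ hv
  obtain ⟨l, hl, hρl⟩ := part1 ρ hρ0 hρpsd hρΓ hρle
  have hl0 : (l : ℂ) ≠ 0 := by exact_mod_cast hl.ne'
  have hsub : LinearMap.range σ.mulVecLin ≤ ℂ ∙ v := by
    rintro x ⟨u, rfl⟩
    have hσu : σ *ᵥ u = (l : ℂ)⁻¹ • (ρ *ᵥ u) := by
      rw [hρl, Matrix.smul_mulVec, smul_smul, inv_mul_cancel₀ hl0, one_smul]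
    rw [Matrix.mulVecLin_apply, hσu, hρdef, outer_mulVec, smul_smul]
    exact Submodule.smul_mem _ _ (Submodule.mem_span_singleton_self v)
  have hfin : σ.rank ≤ 1 := by
    rw [Matrix.rank]
    calc Module.finrank ℂ (LinearMap.range σ.mulVecLin)
        ≤ Module.finrank ℂ (ℂ ∙ v) := Submodule.finrank_mono hsub
      _ = 1 := finrank_span_singleton hv0
  omega
end
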